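/- Let k(x,x') = exp(-‖x-x'‖₂²/(2σ²)) be the Gaussian kernel on ℝ^d and ω ~ N(0, σ⁻²I_d), b ~ Uniform[0,2π]. Then E_{ω,b}[2 cos(ωᵀx + b) cos(ωᵀx' + b)] = k(x,x'). -/

import Mathlib

open MeasureTheory ProbabilityTheory Complex
open scoped NNReal ENNReal Real

lemma aux_prod {ι : Type*} [Fintype ι] (μ : Measure ℝ) [SigmaFinite μ] (f : ι → ℝ → ℂ) :
    ∫ x : ι → ℝ, ∏ i, f i (x i) ∂(Measure.pi fun _ => μ) = ∏ i, ∫ x, f i x ∂μ := by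
  letI : MeasureSpace ℝ := ⟨μ⟩
  exact MeasureTheory.integral_fintype_prod_eq_prod f

lemma gauss_char (v : ℝ≥0) (hv : (0:ℝ) < v) (a : ℝ) :
    ∫ t : ℝ, Complex.exp (Complex.I * a * t) ∂(gaussianReal 0 v) =
      Real.exp (-(v * a ^ 2) / 2) := by
  rw [gaussianReal_of_var_ne_zero 0 (by exact_mod_cast hv.ne')]
  have hpdf : gaussianPDF 0 v = fun x => ((gaussianPDFReal 0 v x).toNNReal : ℝ≥0∞) := by
    ext x; rw [gaussianPDF_def]; rfl
  rw [hpdf, integral_withDensity_eq_integral_smul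
    ((measurable_gaussianPDFReal 0 v).real_toNNReal) _]
  have hvne : (v:ℝ) ≠ 0 := hv.ne'
  have hform : ∀ x : ℝ, (gaussianPDFReal 0 v x).toNNReal • Complex.exp (Complex.I * a * x)
      = ((Real.sqrt (2 * Real.pi * v))⁻¹ : ℂ) *
        (Complex.exp (Complex.I * a * x) * Complex.exp (-(1/(2*(v:ℝ)) : ℂ) * x ^ 2)) := by
    intro x
    have hnn : 0 ≤ gaussianPDFReal 0 v x := (gaussianPDFReal_pos 0 v x (by exact_mod_cast hv.ne')).le
    rw [NNReal.smul_def, Real.coe_toNNReal _ hnn, gaussianPDFReal]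
    rw [Complex.real_smul]
    push_cast
    have : Complex.exp (-(↑x - 0) ^ 2 / (2 * (v:ℝ))) = Complex.exp (-(1/(2*(v:ℝ)) : ℂ) * x ^ 2) := by
      congr 1
      field_simp
      simp only [sub_zero]
    rw [this]
    ring
  simp_rw [hform]
  rw [MeasureTheory.integral_const_mul]
  have hb : (0:ℝ) < (1/(2*(v:ℝ)) : ℂ).re := by
    simp only [Complex.div_re]
    norm_num
    positivity
  rw [fourierIntegral_gaussian hb (a : ℂ)]
  have h1 : (↑Real.pi / (1/(2*(v:ℝ)) : ℂ)) = ((2 * Real.pi * v : ℝ) : ℂ) := by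
    push_cast; field_simp
  rw [h1]
  have h2 : ((2 * Real.pi * v : ℝ) : ℂ) ^ (1/2 : ℂ) = (Real.sqrt (2 * Real.pi * v) : ℂ) := by
    rw [show ((1:ℂ)/2) = ((1/2 : ℝ) : ℂ) by norm_num]
    rw [← Complex.ofReal_cpow (by positivity)]
    rw [← Real.sqrt_eq_rpow]
  rw [h2]
  have h3 : (-(a:ℂ) ^ 2 / (4 * (1/(2*(v:ℝ))))) = ((-(v * a^2)/2 : ℝ) : ℂ) := by
    push_cast; field_simp; ring
  rw [h3, ← Complex.ofReal_exp]
  have hs : Real.sqrt (2 * Real.pi * v) ≠ 0 := by positivity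
  rw [← mul_assoc]
  norm_cast
  rw [inv_mul_cancel₀ hs, one_mul]

lemma inner_int (u v : ℝ) :
    (∫ b : ℝ, 2 * Real.cos (u + b) * Real.cos (v + b)
        ∂((ENNReal.ofReal (2 * Real.pi))⁻¹ •
            volume.restrict (Set.Icc (0 : ℝ) (2 * Real.pi))))
      = Real.cos (u - v) := by
  rw [integral_smul_measure]
  rw [ENNReal.toReal_inv, ENNReal.toReal_ofReal (by positivity)]
  rw [MeasureTheory.integral_Icc_eq_integral_Ioc,
    ← intervalIntegral.integral_of_le (by positivity : (0:ℝ) ≤ 2 * Real.pi)]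
  have key : ∀ b : ℝ, 2 * Real.cos (u + b) * Real.cos (v + b)
      = Real.cos (u - v) + Real.cos (2 * b + (u + v)) := by
    intro b
    rw [Real.cos_add_cos]
    have h1 : (u - v + (2 * b + (u + v))) / 2 = u + b := by ring
    have h2 : (u - v - (2 * b + (u + v))) / 2 = -(v + b) := by ring
    rw [h1, h2, Real.cos_neg]
  simp_rw [key]
  rw [intervalIntegral.integral_add (intervalIntegrable_const)
    ((by fun_prop : Continuous fun b : ℝ => Real.cos (2 * b + (u + v))).intervalIntegrable _ _)]
  rw [intervalIntegral.integral_const]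
  rw [intervalIntegral.integral_comp_mul_add Real.cos two_ne_zero (u + v)]
  rw [integral_cos]
  have hsin : Real.sin (2 * (2 * Real.pi) + (u + v)) = Real.sin (2 * 0 + (u + v)) := by
    rw [show 2 * (2 * Real.pi) + (u + v) = ((2 * 0 + (u + v)) + 2 * Real.pi) + 2 * Real.pi by ring,
      Real.sin_add_two_pi, Real.sin_add_two_pi]
  rw [hsin, sub_self, smul_zero, add_zero, smul_eq_mul, smul_eq_mul]
  have : (2 * Real.pi - 0) * Real.cos (u - v) = (2 * Real.pi) * Real.cos (u - v) := by ring
  rw [this, ← mul_assoc, inv_mul_cancel₀ (by positivity), one_mul]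

theorem rff_cos_shift_unbiased (d : ℕ) (σ : ℝ) (hσ : 0 < σ) (x x' : Fin d → ℝ) :
    (∫ ω : Fin d → ℝ,
        (∫ b : ℝ,
            2 * Real.cos ((∑ i, ω i * x i) + b) * Real.cos ((∑ i, ω i * x' i) + b)
          ∂((ENNReal.ofReal (2 * Real.pi))⁻¹ •
              volume.restrict (Set.Icc (0 : ℝ) (2 * Real.pi))))
      ∂(Measure.pi fun _ : Fin d => gaussianReal 0 ⟨σ⁻¹ ^ 2, by positivity⟩))
      = Real.exp (-(∑ i, (x i - x' i) ^ 2) / (2 * σ ^ 2)) := by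
  set v : ℝ≥0 := ⟨σ⁻¹ ^ 2, by positivity⟩ with hvdef
  have hvpos : (0:ℝ) < v := by
    show (0:ℝ) < σ⁻¹ ^ 2; positivity
  have h1 : ∀ ω : Fin d → ℝ,
      (∫ b : ℝ, 2 * Real.cos ((∑ i, ω i * x i) + b) * Real.cos ((∑ i, ω i * x' i) + b)
        ∂((ENNReal.ofReal (2 * Real.pi))⁻¹ •
            volume.restrict (Set.Icc (0 : ℝ) (2 * Real.pi))))
      = Real.cos (∑ i, ω i * (x i - x' i)) := by
    intro ω
    rw [inner_int]
    congr 1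
    rw [← Finset.sum_sub_distrib]
    exact Finset.sum_congr rfl fun i _ => by ring
  simp_rw [h1]
  have h2 : ∀ ω : Fin d → ℝ, Real.cos (∑ i, ω i * (x i - x' i))
      = (∏ i, Complex.exp (Complex.I * (x i - x' i) * ω i)).re := by
    intro ω
    rw [← Complex.exp_sum]
    have : ∑ i, Complex.I * (x i - x' i) * (ω i : ℂ)
        = ((∑ i, ω i * (x i - x' i) : ℝ) : ℂ) * Complex.I := by
      push_cast
      rw [Finset.sum_mul]
      exact Finset.sum_congr rfl fun i _ => by ring
    rw [this, Complex.exp_ofReal_mul_I_re]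
  simp_rw [h2]
  have hint : Integrable (fun ω : Fin d → ℝ => ∏ i, Complex.exp (Complex.I * (x i - x' i) * ω i))
      (Measure.pi fun _ : Fin d => gaussianReal 0 v) := by
    refine MeasureTheory.Integrable.mono' (integrable_const 1) ?_ ?_
    · exact Continuous.aestronglyMeasurable (by continuity)
    · filter_upwards with ω
      rw [norm_prod]
      have : ∀ i : Fin d, ‖Complex.exp (Complex.I * (x i - x' i) * ω i)‖ = 1 := by
        intro i
        rw [Complex.norm_exp]
        simp
      simp [this]
  rw [← RCLike.re_eq_complex_re, integral_re hint, RCLike.re_eq_complex_re]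
  rw [aux_prod (gaussianReal 0 v) (fun i t => Complex.exp (Complex.I * (x i - x' i) * t))]
  have h3 : ∀ i : Fin d, (∫ t : ℝ, Complex.exp (Complex.I * (x i - x' i) * t)
      ∂(gaussianReal 0 v)) = ((Real.exp (-((v:ℝ) * (x i - x' i) ^ 2) / 2) : ℝ) : ℂ) := by
    intro i
    have := gauss_char v hvpos (x i - x' i)
    rw [Complex.ofReal_sub] at this
    exact this
  simp_rw [h3]
  rw [← Complex.ofReal_prod, Complex.ofReal_re, ← Real.exp_sum]
  congr 1
  have hcv : (v:ℝ) = σ⁻¹ ^ 2 := rfl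
  have hterm : ∀ i : Fin d, -((v:ℝ) * (x i - x' i) ^ 2) / 2 = -(σ⁻¹ ^ 2 / 2) * (x i - x' i) ^ 2 :=
    fun i => by rw [hcv]; ring
  simp_rw [hterm]
  rw [← Finset.mul_sum]
  rw [show -(σ⁻¹ ^ 2 / 2) = -(1/(2*σ^2)) by rw [inv_pow]; ring]
  ring
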